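/- Over an algebraically closed field of characteristic 0, the variety in ℙ³ defined by x₀² + x₁² + x₂² + x₃² = 0 and −λ₁x₂² − λ₂x₃² = 0 with λ₁, λ₂ nonzero and distinct has exactly two singular points, namely (±i : 1 : 0 : 0) where i² = −1. -/
import Mathlib


open MvPolynomial

/-- rank ≥ 2 from a nonzero 2×2 minor. -/
lemma aux_rank_ge {K : Type*} [Field K] (A : Matrix (Fin 2) (Fin 4) K) (c : Fin 2 → Fin 4)
    (h : A 0 (c 0) * A 1 (c 1) - A 0 (c 1) * A 1 (c 0) ≠ 0) : 2 ≤ A.rank := by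
  let M : Matrix (Fin 4) (Fin 2) K := Matrix.of fun j k => if j = c k then 1 else 0
  have hmul : (A * M) = Matrix.of ![![A 0 (c 0), A 0 (c 1)], ![A 1 (c 0), A 1 (c 1)]] := by
    ext r k
    fin_cases r <;> fin_cases k <;>
      simp [Matrix.mul_apply, M, Fin.sum_univ_four]
  have h2 : (A * M).rank = 2 := by
    rw [hmul, Matrix.rank_of_isUnit]
    · simp
    · rw [Matrix.isUnit_iff_isUnit_det, Matrix.det_fin_two]
      simpa using isUnit_iff_ne_zero.mpr h
  have := Matrix.rank_mul_le_left A M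
  omega

/-- rank ≤ 1 when the second row is zero. -/
lemma aux_rank_le {K : Type*} [Field K] (v : Fin 4 → K) :
    (Matrix.of ![v, 0] : Matrix (Fin 2) (Fin 4) K).rank ≤ 1 := by
  have : (Matrix.of ![v, 0] : Matrix (Fin 2) (Fin 4) K)
      = (Matrix.of ![![(1:K)], ![0]]) * (Matrix.of ![v]) := by
    ext r j
    fin_cases r <;> simp [Matrix.mul_apply]
  rw [this]
  calc ((Matrix.of ![![(1:K)], ![0]]) * (Matrix.of ![v])).rank
      ≤ (Matrix.of ![v] : Matrix (Fin 1) (Fin 4) K).rank := Matrix.rank_mul_le_right _ _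
    _ ≤ 1 := by simpa using Matrix.rank_le_card_height (Matrix.of ![v] : Matrix (Fin 1) (Fin 4) K)


lemma aux_key {K : Type*} [Field K] [CharZero K] (lam₁ lam₂ a t : K) (ha : a ^ 2 = -1)
    (Q₁ Q₂ : MvPolynomial (Fin 4) K)
    (hQ₁ : Q₁ = X 0 ^ 2 + X 1 ^ 2 + X 2 ^ 2 + X 3 ^ 2)
    (hQ₂ : Q₂ = - C lam₁ * X 2 ^ 2 - C lam₂ * X 3 ^ 2) :
    eval (t • ![a,1,0,0]) Q₁ = 0 ∧ eval (t • ![a,1,0,0]) Q₂ = 0 ∧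
    (Matrix.of fun (r : Fin 2) (j : Fin 4) =>
        eval (t • ![a,1,0,0]) (pderiv j (if r = 0 then Q₁ else Q₂))).rank < 2 := by
  refine ⟨?_, ?_, ?_⟩
  · simp only [hQ₁, map_add, map_pow, eval_X, Pi.smul_apply, smul_eq_mul,
      Matrix.cons_val_zero, Matrix.cons_val_one, Matrix.head_cons]
    have h2 : (![a,1,0,0] : Fin 4 → K) 2 = 0 := by simp
    have h3 : (![a,1,0,0] : Fin 4 → K) 3 = 0 := by simp
    rw [h2, h3]
    linear_combination t ^ 2 * ha
  · have h2 : (t • ![a,1,0,0] : Fin 4 → K) 2 = 0 := by simp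
    have h3 : (t • ![a,1,0,0] : Fin 4 → K) 3 = 0 := by simp
    simp [hQ₂, h2, h3]
  · have hA : (Matrix.of fun (r : Fin 2) (j : Fin 4) =>
        eval (t • ![a,1,0,0]) (pderiv j (if r = 0 then Q₁ else Q₂)))
        = Matrix.of ![![2*(t*a), 2*t, 0, 0], 0] := by
      ext r j
      fin_cases r <;> fin_cases j <;>
        simp [hQ₁, hQ₂, pderiv_X, Pi.single_apply] <;> ring
    rw [hA]
    have := aux_rank_le (![2*(t*a), 2*t, 0, 0] : Fin 4 → K)
    omega

/-- Over an algebraically closed field of characteristic zero, the intersection in `ℙ³`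
of the quadrics `x₀² + x₁² + x₂² + x₃² = 0` and `-λ₁x₂² - λ₂x₃² = 0` (with `λ₁, λ₂`
nonzero and distinct) has exactly two singular points, namely `(± i : 1 : 0 : 0)`
where `i² = -1`: a nonzero `x` represents a singular point of the intersection
(i.e. lies on both quadrics with the `2 × 4` Jacobian of rank `< 2`) iff it is a
scalar multiple of `(i, 1, 0, 0)` or of `(-i, 1, 0, 0)`. -/
theorem stmt7 {K : Type*} [Field K] [IsAlgClosed K] [CharZero K]
    (lam₁ lam₂ : K) (h₁ : lam₁ ≠ 0) (h₂ : lam₂ ≠ 0) (h₁₂ : lam₁ ≠ lam₂)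
    (i : K) (hi : i ^ 2 = -1)
    (Q₁ Q₂ : MvPolynomial (Fin 4) K)
    (hQ₁ : Q₁ = X 0 ^ 2 + X 1 ^ 2 + X 2 ^ 2 + X 3 ^ 2)
    (hQ₂ : Q₂ = - C lam₁ * X 2 ^ 2 - C lam₂ * X 3 ^ 2) :
    ∀ x : Fin 4 → K, x ≠ 0 →
      ((eval x Q₁ = 0 ∧ eval x Q₂ = 0 ∧
        (Matrix.of fun (r : Fin 2) (j : Fin 4) =>
          eval x (pderiv j (if r = 0 then Q₁ else Q₂))).rank < 2) ↔
        (∃ t : K, t ≠ 0 ∧ (x = t • ![i, 1, 0, 0] ∨ x = t • ![-i, 1, 0, 0]))) := by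
  intro x hx
  have two_ne : (2 : K) ≠ 0 := two_ne_zero
  have hA : (Matrix.of fun (r : Fin 2) (j : Fin 4) =>
        eval x (pderiv j (if r = 0 then Q₁ else Q₂)))
      = Matrix.of ![![2*x 0, 2*x 1, 2*x 2, 2*x 3],
          ![0, 0, -(2*lam₁*x 2), -(2*lam₂*x 3)]] := by
    ext r j
    fin_cases r <;> fin_cases j <;>
      simp [hQ₁, hQ₂, pderiv_X, Pi.single_apply] <;> ring
  have eQ₁ : eval x Q₁ = x 0 ^ 2 + x 1 ^ 2 + x 2 ^ 2 + x 3 ^ 2 := by simp [hQ₁]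
  have eQ₂ : eval x Q₂ = -lam₁ * x 2 ^ 2 - lam₂ * x 3 ^ 2 := by simp [hQ₂]
  constructor
  · rintro ⟨e1, e2, hrank⟩
    rw [hA] at hrank
    set B : Matrix (Fin 2) (Fin 4) K := Matrix.of ![![2*x 0, 2*x 1, 2*x 2, 2*x 3],
        ![0, 0, -(2*lam₁*x 2), -(2*lam₂*x 3)]] with hB
    have minor : ∀ c : Fin 2 → Fin 4,
        B 0 (c 0) * B 1 (c 1) - B 0 (c 1) * B 1 (c 0) = 0 := by
      intro c
      by_contra hc
      have := aux_rank_ge B c hc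
      omega
    have m02 := minor ![0, 2]
    have m03 := minor ![0, 3]
    have m12 := minor ![1, 2]
    have m13 := minor ![1, 3]
    have m23 := minor ![2, 3]
    simp only [hB, Matrix.cons_val_zero, Matrix.cons_val_one, Matrix.head_cons,
      Matrix.of_apply, Matrix.cons_val_fin_one, Matrix.cons_val', Matrix.head_fin_const,
      Matrix.empty_val', Matrix.cons_val_two, Matrix.cons_val_three, Matrix.tail_cons] at m02 m03 m12 m13 m23
    -- derive vanishing products
    have p23 : x 2 * x 3 = 0 := by
      have h4 : (4 : K) ≠ 0 := by norm_num
      have hq : (x 2 * x 3) * (4 * (lam₁ - lam₂)) = 0 := by linear_combination m23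
      have hd : (4 : K) * (lam₁ - lam₂) ≠ 0 := mul_ne_zero h4 (sub_ne_zero.mpr h₁₂)
      exact (mul_eq_zero.mp hq).resolve_right hd
    -- x 2 = 0 and x 3 = 0
    have hx23 : x 2 = 0 ∧ x 3 = 0 := by
      rw [eQ₂] at e2
      rcases mul_eq_zero.mp p23 with h | h
      · refine ⟨h, ?_⟩
        have : lam₂ * x 3 ^ 2 = 0 := by linear_combination -e2 - lam₁ * x 2 * h
        rcases mul_eq_zero.mp this with h' | h'
        · exact absurd h' h₂
        · exact pow_eq_zero_iff (n := 2) (by norm_num) |>.mp h'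
      · refine ⟨?_, h⟩
        have : lam₁ * x 2 ^ 2 = 0 := by linear_combination -e2 - lam₂ * x 3 * h
        rcases mul_eq_zero.mp this with h' | h'
        · exact absurd h' h₁
        · exact pow_eq_zero_iff (n := 2) (by norm_num) |>.mp h'
    obtain ⟨hx2, hx3⟩ := hx23
    rw [eQ₁, hx2, hx3] at e1
    have e1' : x 0 ^ 2 + x 1 ^ 2 = 0 := by linear_combination e1
    have hx1 : x 1 ≠ 0 := by
      intro h1'
      have h0 : x 0 = 0 := by
        have : x 0 ^ 2 = 0 := by rw [h1'] at e1'; simpa using e1'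
        exact pow_eq_zero_iff (n := 2) (by norm_num) |>.mp this
      apply hx
      funext j
      fin_cases j <;> simp [h0, h1', hx2, hx3]
    refine ⟨x 1, hx1, ?_⟩
    have factored : (x 0 - i * x 1) * (x 0 + i * x 1) = 0 := by
      have : x 0 ^ 2 - (i * x 1) ^ 2 = 0 := by
        have : (i * x 1) ^ 2 = - x 1 ^ 2 := by rw [mul_pow, hi]; ring
        rw [this]; linear_combination e1'
      linear_combination this
    rcases mul_eq_zero.mp factored with h | h
    · left
      have h0 : x 0 = i * x 1 := by linear_combination h
      funext j
      fin_cases j <;> simp [h0, hx2, hx3, mul_comm]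
    · right
      have h0 : x 0 = -i * x 1 := by linear_combination h
      funext j
      fin_cases j <;> simp [h0, hx2, hx3] <;> ring
  · rintro ⟨t, ht, h | h⟩
    · subst h
      exact aux_key lam₁ lam₂ i t hi Q₁ Q₂ hQ₁ hQ₂
    · subst h
      exact aux_key lam₁ lam₂ (-i) t (by rw [neg_pow]; simp [hi]) Q₁ Q₂ hQ₁ hQ₂
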